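/- For an arbitrary dictionary D (a matrix with nonzero columns d_ℓ) with coherence μ(D) = max_{ℓ≠r} |⟨d_ℓ, d_r⟩|/(‖d_ℓ‖‖d_r‖), the Kruskal rank satisfies σ(D) > 1/μ(D) − 1; i.e., every set of k columns with k ≤ 1/μ(D) is linearly independent provided k < 1/μ(D) + 1. -/

import Mathlib

/-- Kruskal-rank bound for arbitrary dictionaries: every set of `k` columns with
`k < 1/μ(D) + 1` is linearly independent. -/
theorem stmt6 {N m : ℕ}
    (d : Fin m → EuclideanSpace ℂ (Fin N))
    (hd : ∀ ℓ, d ℓ ≠ 0)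
    (μ : ℝ) (hμpos : 0 < μ)
    (hμ : ∀ ℓ r, ℓ ≠ r → ‖(inner ℂ (d ℓ) (d r) : ℂ)‖ ≤ μ * (‖d ℓ‖ * ‖d r‖)) :
    ∀ S : Finset (Fin m), ((S.card : ℝ) < 1 / μ + 1) →
      LinearIndependent ℂ (fun i : {i // i ∈ S} => d i.1) := by
  intro S hS
  rw [Fintype.linearIndependent_iff]
  intro g hg
  by_contra hne
  push_neg at hne
  obtain ⟨j, hj⟩ := hne
  have hne' : (Finset.univ : Finset {i // i ∈ S}).Nonempty := ⟨j, Finset.mem_univ j⟩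
  obtain ⟨i0, -, hi0⟩ := Finset.exists_max_image Finset.univ
    (fun i : {i // i ∈ S} => ‖g i‖ * ‖d i.1‖) hne'
  set M : ℝ := ‖g i0‖ * ‖d i0.1‖ with hM
  have hdpos : ∀ i : {i // i ∈ S}, (0:ℝ) < ‖d i.1‖ := fun i => norm_pos_iff.mpr (hd i.1)
  have hMpos : 0 < M := by
    have := hi0 j (Finset.mem_univ j)
    have : 0 < ‖g j‖ * ‖d j.1‖ :=
      mul_pos (norm_pos_iff.mpr hj) (hdpos j)
    linarith [hi0 j (Finset.mem_univ j)]
  -- take inner product with d i0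
  have key : (inner ℂ (d i0.1) (∑ i : {i // i ∈ S}, g i • d i.1) : ℂ) = 0 := by
    rw [hg, inner_zero_right]
  rw [inner_sum] at key
  simp only [inner_smul_right] at key
  have hsplit := Finset.add_sum_erase Finset.univ
    (fun i : {i // i ∈ S} => g i * (inner ℂ (d i0.1) (d i.1) : ℂ)) (Finset.mem_univ i0)
  rw [← hsplit] at key
  have heq : g i0 * (inner ℂ (d i0.1) (d i0.1) : ℂ)
      = - ∑ i ∈ Finset.univ.erase i0, g i * (inner ℂ (d i0.1) (d i.1) : ℂ) := by
    linear_combination key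
  -- norm bound
  have hcard : ((Finset.univ.erase i0).card : ℝ) = (Fintype.card {i // i ∈ S} : ℝ) - 1 := by
    have h1 : 1 ≤ S.card := Finset.card_pos.mpr ⟨j.1, j.2⟩
    rw [Finset.card_erase_of_mem (Finset.mem_univ i0), Finset.card_univ, Fintype.card_coe]
    rw [Nat.cast_sub h1]; norm_num
  have hbound : ‖g i0‖ * ‖d i0.1‖ ^ 2
      ≤ ((Fintype.card {i // i ∈ S} : ℝ) - 1) * (μ * (‖d i0.1‖ * M)) := by
    have h1 : ‖g i0 * (inner ℂ (d i0.1) (d i0.1) : ℂ)‖ = ‖g i0‖ * ‖d i0.1‖ ^ 2 := by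
      rw [norm_mul, inner_self_eq_norm_sq_to_K]
      simp [norm_pow]
    calc ‖g i0‖ * ‖d i0.1‖ ^ 2 = ‖g i0 * (inner ℂ (d i0.1) (d i0.1) : ℂ)‖ := h1.symm
      _ = ‖∑ i ∈ Finset.univ.erase i0, g i * (inner ℂ (d i0.1) (d i.1) : ℂ)‖ := by
          rw [heq, norm_neg]
      _ ≤ ∑ i ∈ Finset.univ.erase i0, ‖g i * (inner ℂ (d i0.1) (d i.1) : ℂ)‖ :=
          norm_sum_le _ _
      _ ≤ ∑ i ∈ Finset.univ.erase i0, μ * (‖d i0.1‖ * M) := by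
          apply Finset.sum_le_sum
          intro i hi
          have hne2 : i0.1 ≠ i.1 := by
            intro h
            exact (Finset.mem_erase.mp hi).1 (Subtype.ext h.symm)
          rw [norm_mul]
          have h2 : ‖(inner ℂ (d i0.1) (d i.1) : ℂ)‖ ≤ μ * (‖d i0.1‖ * ‖d i.1‖) :=
            hμ _ _ hne2
          have h3 : ‖g i‖ * ‖d i.1‖ ≤ M := hi0 i (Finset.mem_univ i)
          calc ‖g i‖ * ‖(inner ℂ (d i0.1) (d i.1) : ℂ)‖
              ≤ ‖g i‖ * (μ * (‖d i0.1‖ * ‖d i.1‖)) := by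
                exact mul_le_mul_of_nonneg_left h2 (norm_nonneg _)
            _ = μ * ‖d i0.1‖ * (‖g i‖ * ‖d i.1‖) := by ring
            _ ≤ μ * ‖d i0.1‖ * M := by
                apply mul_le_mul_of_nonneg_left h3
                positivity
            _ = μ * (‖d i0.1‖ * M) := by ring
      _ = ((Finset.univ.erase i0).card : ℝ) * (μ * (‖d i0.1‖ * M)) := by
          rw [Finset.sum_const, nsmul_eq_mul]
      _ = ((Fintype.card {i // i ∈ S} : ℝ) - 1) * (μ * (‖d i0.1‖ * M)) := by
          rw [hcard]
  -- derive contradiction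
  have hk : (Fintype.card {i // i ∈ S} : ℝ) = (S.card : ℝ) := by
    simp [Fintype.card_coe]
  have hμk : μ * ((S.card : ℝ) - 1) < 1 := by
    have : (S.card : ℝ) - 1 < 1 / μ := by linarith
    calc μ * ((S.card : ℝ) - 1) < μ * (1 / μ) :=
      mul_lt_mul_of_pos_left this hμpos
      _ = 1 := by field_simp
  have hfin : M * ‖d i0.1‖ ≤ μ * ((S.card : ℝ) - 1) * (M * ‖d i0.1‖) := by
    calc M * ‖d i0.1‖ = ‖g i0‖ * ‖d i0.1‖ ^ 2 := by rw [hM]; ring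
      _ ≤ ((Fintype.card {i // i ∈ S} : ℝ) - 1) * (μ * (‖d i0.1‖ * M)) := hbound
      _ = μ * ((S.card : ℝ) - 1) * (M * ‖d i0.1‖) := by rw [hk]; ring
  have hMd : 0 < M * ‖d i0.1‖ := mul_pos hMpos (hdpos i0)
  nlinarith [hfin, hMd, hμk]
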